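/- The absolute value of the asynchronous temporal robustness is bounded above by the absolute value of the synchronous temporal robustness: |θ^c(x)| ≤ |η^c(x)|. -/

import Mathlib

open scoped Classical

noncomputable section

def shift {α : Type*} (x : ℤ → α) (κ : ℤ) : ℤ → α := fun t => x (t + κ)

def ashift {n : ℕ} (x : ℤ → Fin n → ℝ) (κ : Fin n → ℤ) : ℤ → Fin n → ℝ :=
  fun t i => x (t + κ i) i

def beta {n : ℕ} (c : (Fin n → ℝ) → ℤ → ℝ) (x : ℤ → Fin n → ℝ) : ℤ :=
  if ∀ t : ℤ, 0 ≤ c (x t) t then 1 else -1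

def absE (a : EReal) : EReal := max a (-a)

def eta {n : ℕ} (c : (Fin n → ℝ) → ℤ → ℝ) (x : ℤ → Fin n → ℝ) : EReal :=
  ((beta c x : ℝ) : EReal) * sSup ((fun τ : ℕ => ((τ : ℝ) : EReal)) ''
    {τ : ℕ | ∀ κ : ℤ, |κ| ≤ (τ : ℤ) → beta c (shift x κ) = beta c x})

def theta {n : ℕ} (c : (Fin n → ℝ) → ℤ → ℝ) (x : ℤ → Fin n → ℝ) : EReal :=
  ((beta c x : ℝ) : EReal) * sSup ((fun τ : ℕ => ((τ : ℝ) : EReal)) ''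
    {τ : ℕ | ∀ κ : Fin n → ℤ, (∀ i, |κ i| ≤ (τ : ℤ)) → beta c (ashift x κ) = beta c x})

lemma absE_mul_beta {n : ℕ} (c : (Fin n → ℝ) → ℤ → ℝ) (x : ℤ → Fin n → ℝ)
    (s : EReal) (hs : 0 ≤ s) : absE (((beta c x : ℝ) : EReal) * s) = s := by
  have hb : beta c x = 1 ∨ beta c x = -1 := by unfold beta; split <;> simp
  rcases hb with h | h <;> rw [h] <;> unfold absE
  · push_cast
    rw [one_mul]
    exact max_eq_left (le_trans ((by simpa using EReal.neg_le_neg_iff.mpr hs)) hs)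
  · push_cast
    rw [neg_one_mul, neg_neg]
    exact max_eq_right (le_trans ((by simpa using EReal.neg_le_neg_iff.mpr hs)) hs)

/-- |θ^c(x)| ≤ |η^c(x)|. -/
theorem stmt4 {n : ℕ} (c : (Fin n → ℝ) → ℤ → ℝ) (x : ℤ → Fin n → ℝ) :
    absE (theta c x) ≤ absE (eta c x) := by
  set Tθ : Set ℕ :=
    {τ : ℕ | ∀ κ : Fin n → ℤ, (∀ i, |κ i| ≤ (τ : ℤ)) → beta c (ashift x κ) = beta c x}
  set Tη : Set ℕ := {τ : ℕ | ∀ κ : ℤ, |κ| ≤ (τ : ℤ) → beta c (shift x κ) = beta c x}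
  have hsub : Tθ ⊆ Tη := by
    intro τ hτ κ hκ
    have h := hτ (fun _ => κ) (fun _ => hκ)
    have heq : ashift x (fun _ => κ) = shift x κ := rfl
    rwa [heq] at h
  have h0θ : (0 : ℕ) ∈ Tθ := by
    intro κ hκ
    have : κ = fun _ => 0 := by
      funext i
      exact abs_nonpos_iff.mp (hκ i)
    subst this
    have : ashift x (fun _ => (0:ℤ)) = x := by
      funext t i; simp [ashift]
    rw [this]
  have h0sθ : (0 : EReal) ∈ (fun τ : ℕ => ((τ : ℝ) : EReal)) '' Tθ :=
    ⟨0, h0θ, by norm_num⟩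
  have hsθ : 0 ≤ sSup ((fun τ : ℕ => ((τ : ℝ) : EReal)) '' Tθ) := le_sSup h0sθ
  have hsη : 0 ≤ sSup ((fun τ : ℕ => ((τ : ℝ) : EReal)) '' Tη) :=
    le_sSup ⟨0, hsub h0θ, by norm_num⟩
  have hle : sSup ((fun τ : ℕ => ((τ : ℝ) : EReal)) '' Tθ) ≤
      sSup ((fun τ : ℕ => ((τ : ℝ) : EReal)) '' Tη) :=
    sSup_le_sSup (Set.image_mono hsub)
  unfold theta eta
  rw [absE_mul_beta c x _ hsθ, absE_mul_beta c x _ hsη]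
  exact hle
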